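/- For every complex number s with real part β > 0, the derivative of the Dirichlet eta function satisfies |η'(s)| ≤ |s|/β² + 1/β, where η'(s) = -Σ_{n=1}^∞ (-1)^{n+1} (ln n) n^{-s}. -/

import Mathlib

open Filter Topology Complex

noncomputable def etaF (s : ℂ) (x : ℝ) : ℂ := (Real.log x : ℂ) * (x:ℂ) ^ (-s)
noncomputable def etaF' (s : ℂ) (x : ℝ) : ℂ := (1 - s * Real.log x) * (x:ℂ) ^ (-s - 1)
noncomputable def etaG (β c : ℝ) (x : ℝ) : ℝ :=
  -(x ^ (-β) / β) - c * ((Real.log x / β + 1 / β ^ 2) * x ^ (-β))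
noncomputable def etag (β c : ℝ) (x : ℝ) : ℝ := (1 + c * Real.log x) * x ^ (-β - 1)

lemma hasDerivAt_etaF (s : ℂ) (hs : s ≠ 0) {x : ℝ} (hx : 0 < x) :
    HasDerivAt (etaF s) (etaF' s x) x := by
  have hns : (-s : ℂ) ≠ 0 := neg_ne_zero.mpr hs
  have hr : (-s - 1 : ℂ) ≠ -1 := by
    intro h; apply hs; linear_combination -h
  have h1 := (hasDerivAt_ofReal_cpow_const' hx.ne' hr).const_mul (-s)
  have h1' : HasDerivAt (fun y : ℝ => (y:ℂ) ^ (-s)) (-s * (x:ℂ) ^ (-s-1)) x := by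
    simp only [sub_add_cancel] at h1
    have e : (fun y : ℝ => (y:ℂ) ^ (-s)) = fun y : ℝ => -s * ((y:ℂ) ^ (-s) / -s) := by
      funext y
      rw [mul_comm, div_mul_cancel₀ _ hns]
    rw [e]; exact h1
  have h2 : HasDerivAt (fun y : ℝ => (Real.log y : ℂ)) ((x⁻¹ : ℝ) : ℂ) x :=
    (Real.hasDerivAt_log hx.ne').ofReal_comp
  have h := h2.mul h1'
  refine h.congr_deriv ?_
  have hxc : (x:ℂ) ≠ 0 := Complex.ofReal_ne_zero.mpr hx.ne'
  have hsplit : (x:ℂ) ^ (-s - 1) = (x:ℂ) ^ (-s) * (x:ℂ)⁻¹ := by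
    rw [show (-s - 1 : ℂ) = -s + (-1) by ring, Complex.cpow_add _ _ hxc, Complex.cpow_neg_one]
  rw [etaF', hsplit]
  push_cast
  ring

lemma hasDerivAt_etaG (β c : ℝ) (hβ : 0 < β) {x : ℝ} (hx : 0 < x) :
    HasDerivAt (etaG β c) (etag β c x) x := by
  have h1 : HasDerivAt (fun y : ℝ => y ^ (-β)) (-β * x ^ (-β - 1)) x :=
    Real.hasDerivAt_rpow_const (Or.inl hx.ne')
  have hlog := Real.hasDerivAt_log hx.ne'
  have h : HasDerivAt (etaG β c)
      (-((-β * x ^ (-β-1)) / β) -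
        c * ((x⁻¹/β) * x ^ (-β) + (Real.log x/β + 1/β^2) * (-β * x ^ (-β-1)))) x := by
    exact ((h1.div_const β).neg).sub
      ((((hlog.div_const β).add_const (1/β^2)).mul h1).const_mul c)
  convert h using 1
  have hsplit : x ^ (-β - 1) = x ^ (-β) * x⁻¹ := by
    rw [show -β - 1 = -β + (-1) by ring, Real.rpow_add hx, Real.rpow_neg_one]
  rw [etag, hsplit]
  field_simp
  ring

lemma etag_continuousOn (β c : ℝ) {u v : ℝ} (hu : 0 < u) :
    ContinuousOn (etag β c) (Set.Icc u v) := by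
  unfold etag
  intro x hx
  have hx0 : x ≠ 0 := (lt_of_lt_of_le hu hx.1).ne'
  exact ((continuousAt_const.add (continuousAt_const.mul (Real.continuousAt_log hx0))).mul
    (Real.continuousAt_rpow_const x _ (Or.inl hx0))).continuousWithinAt

lemma etaF'_continuousOn (s : ℂ) {u v : ℝ} (hu : 0 < u) :
    ContinuousOn (etaF' s) (Set.Icc u v) := by
  unfold etaF'
  intro x hx
  have hx0 : x ≠ 0 := (lt_of_lt_of_le hu hx.1).ne'
  have hlog : ContinuousAt (fun y : ℝ => ((Real.log y : ℝ) : ℂ)) x :=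
    Complex.continuous_ofReal.continuousAt.comp (Real.continuousAt_log hx0)
  exact ((continuousAt_const.sub (continuousAt_const.mul hlog)).mul
    (Complex.continuousAt_ofReal_cpow_const x _ (Or.inr hx0))).continuousWithinAt

lemma norm_etaF'_le (s : ℂ) {x : ℝ} (hx : 1 ≤ x) : ‖etaF' s x‖ ≤ etag s.re ‖s‖ x := by
  have hx0 : (0:ℝ) < x := lt_of_lt_of_le one_pos hx
  have hlog : 0 ≤ Real.log x := Real.log_nonneg hx
  rw [etaF', etag, norm_mul]
  have h1 : ‖(x:ℂ) ^ (-s - 1)‖ = x ^ (-s.re - 1) := by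
    rw [Complex.norm_cpow_eq_rpow_re_of_pos hx0]
    norm_num
  rw [h1]
  apply mul_le_mul_of_nonneg_right _ (Real.rpow_nonneg hx0.le _)
  calc ‖(1 : ℂ) - s * (Real.log x : ℂ)‖ ≤ ‖(1:ℂ)‖ + ‖s * (Real.log x : ℂ)‖ := norm_sub_le _ _
    _ = 1 + ‖s‖ * Real.log x := by
        rw [norm_one, norm_mul, Complex.norm_real, Real.norm_of_nonneg hlog]

lemma integral_etag (β c : ℝ) (hβ : 0 < β) {u v : ℝ} (hu : 0 < u) (huv : u ≤ v) :
    ∫ x in u..v, etag β c x = etaG β c v - etaG β c u := by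
  apply intervalIntegral.integral_eq_sub_of_hasDerivAt
  · intro x hx
    rw [Set.uIcc_of_le huv] at hx
    exact hasDerivAt_etaG β c hβ (lt_of_lt_of_le hu hx.1)
  · exact ((etag_continuousOn β c hu).intervalIntegrable_of_Icc huv)

lemma key_bound (s : ℂ) (hβ : 0 < s.re) (hs0 : s ≠ 0) {u v : ℝ} (hu : 1 ≤ u) (huv : u ≤ v) :
    ‖(Real.log v : ℂ) * (v:ℂ) ^ (-s) - (Real.log u : ℂ) * (u:ℂ) ^ (-s)‖
      ≤ etaG s.re ‖s‖ v - etaG s.re ‖s‖ u := by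
  show ‖etaF s v - etaF s u‖ ≤ etaG s.re ‖s‖ v - etaG s.re ‖s‖ u

  have hu0 : (0:ℝ) < u := lt_of_lt_of_le one_pos hu
  have hint : IntervalIntegrable (etaF' s) MeasureTheory.volume u v :=
    (etaF'_continuousOn s hu0).intervalIntegrable_of_Icc huv
  have hftc : ∫ x in u..v, etaF' s x = etaF s v - etaF s u := by
    apply intervalIntegral.integral_eq_sub_of_hasDerivAt
    · intro x hx
      rw [Set.uIcc_of_le huv] at hx
      exact hasDerivAt_etaF s hs0 (lt_of_lt_of_le hu0 hx.1)
    · exact hint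
  rw [← hftc, ← integral_etag s.re ‖s‖ hβ hu0 huv]
  calc ‖∫ x in u..v, etaF' s x‖ ≤ ∫ x in u..v, ‖etaF' s x‖ :=
        intervalIntegral.norm_integral_le_integral_norm huv
    _ ≤ ∫ x in u..v, etag s.re ‖s‖ x := by
        apply intervalIntegral.integral_mono_on huv hint.norm
          ((etag_continuousOn s.re ‖s‖ hu0).intervalIntegrable_of_Icc huv)
        exact fun x hx => norm_etaF'_le s (le_trans hu hx.1)

lemma etag_nonneg {β c x : ℝ} (hc : 0 ≤ c) (hx : 1 ≤ x) : 0 ≤ etag β c x :=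
  mul_nonneg (add_nonneg zero_le_one (mul_nonneg hc (Real.log_nonneg hx)))
    (Real.rpow_nonneg (le_trans zero_le_one hx) _)

lemma etaG_mono (β c : ℝ) (hβ : 0 < β) (hc : 0 ≤ c) {u v : ℝ} (hu : 1 ≤ u) (huv : u ≤ v) :
    etaG β c u ≤ etaG β c v := by
  have h := integral_etag β c hβ (lt_of_lt_of_le one_pos hu) huv
  have h0 : 0 ≤ ∫ x in u..v, etag β c x :=
    intervalIntegral.integral_nonneg huv (fun x hx => etag_nonneg hc (le_trans hu hx.1))
  linarith

lemma etaG_nonpos (β c : ℝ) (hβ : 0 < β) (hc : 0 ≤ c) {x : ℝ} (hx : 1 ≤ x) :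
    etaG β c x ≤ 0 := by
  have hx0 : (0:ℝ) < x := lt_of_lt_of_le one_pos hx
  have h1 : 0 ≤ x ^ (-β) := Real.rpow_nonneg hx0.le _
  have h2 : 0 ≤ Real.log x := Real.log_nonneg hx
  have h3 : 0 ≤ c * ((Real.log x / β + 1 / β ^ 2) * x ^ (-β)) := by positivity
  have h4 : 0 ≤ x ^ (-β) / β := by positivity
  rw [etaG]; linarith

lemma etaG_one (β c : ℝ) : etaG β c 1 = -(1/β) - c/β^2 := by
  simp [etaG, Real.log_one]; ring

theorem eta_deriv_bound (s : ℂ) (hs : 0 < s.re) :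
    ∃ L : ℂ,
      Tendsto
        (fun N : ℕ => ∑ n ∈ Finset.Icc 1 N,
          -((-1 : ℂ) ^ (n + 1) * (Real.log n : ℂ) * (n : ℂ) ^ (-s)))
        atTop (𝓝 L) ∧ ‖L‖ ≤ ‖s‖ / s.re ^ 2 + 1 / s.re := by
  have hs0 : s ≠ 0 := fun h => by simp [h] at hs
  set β := s.re with hβdef
  set c := ‖s‖ with hcdef
  have hc : 0 ≤ c := norm_nonneg _
  set a : ℕ → ℂ := fun n => (Real.log n : ℂ) * (n:ℂ) ^ (-s) with ha
  set b : ℕ → ℂ := fun k => a (2*k+2) - a (2*k+3) with hb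
  set C : ℝ := ‖s‖ / s.re ^ 2 + 1 / s.re with hC
  -- per-k bound
  have hbk : ∀ k : ℕ, ‖b k‖ ≤ etaG β c (2*(k+1)+2 : ℕ) - etaG β c (2*k+2 : ℕ) := by
    intro k
    have h1 : (1:ℝ) ≤ ((2*k+2 : ℕ) : ℝ) := by push_cast; linarith [Nat.cast_nonneg (α := ℝ) k]
    have h12 : ((2*k+2 : ℕ) : ℝ) ≤ ((2*k+3 : ℕ) : ℝ) := by push_cast; linarith
    have h23 : ((2*k+3 : ℕ) : ℝ) ≤ ((2*(k+1)+2 : ℕ) : ℝ) := by push_cast; linarith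
    have hkb := key_bound s hs hs0 h1 h12
    have hmono := etaG_mono β c hs hc (le_trans h1 h12) h23
    have : ‖b k‖ = ‖(Real.log ((2*k+3:ℕ):ℝ) : ℂ) * (((2*k+3:ℕ):ℝ):ℂ) ^ (-s)
        - (Real.log ((2*k+2:ℕ):ℝ) : ℂ) * (((2*k+2:ℕ):ℝ):ℂ) ^ (-s)‖ := by
      rw [hb, norm_sub_rev, ha]
      norm_num
    rw [this]
    exact le_trans hkb (by linarith)
  -- partial sums of norms bounded by C
  have hpartial : ∀ n : ℕ, ∑ k ∈ Finset.range n, ‖b k‖ ≤ C := by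
    intro n
    calc ∑ k ∈ Finset.range n, ‖b k‖
        ≤ ∑ k ∈ Finset.range n, (etaG β c (2*(k+1)+2 : ℕ) - etaG β c (2*k+2 : ℕ)) :=
          Finset.sum_le_sum fun k _ => hbk k
      _ = etaG β c (2*n+2 : ℕ) - etaG β c (2*0+2 : ℕ) :=
          Finset.sum_range_sub (fun k => etaG β c (2*k+2 : ℕ)) n
      _ ≤ 0 - etaG β c 1 := by
          have h1 : (1:ℝ) ≤ ((2*n+2 : ℕ) : ℝ) := by push_cast; linarith [Nat.cast_nonneg (α := ℝ) n]
          have e1 := etaG_nonpos β c hs hc h1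
          have e2 := etaG_mono β c hs hc le_rfl (by norm_num : (1:ℝ) ≤ ((2*0+2 : ℕ) : ℝ))
          linarith
      _ = C := by rw [etaG_one, hC]; ring
  have hsumnorm : Summable (fun k => ‖b k‖) :=
    summable_of_sum_range_le (fun k => norm_nonneg _) hpartial
  have hsumb : Summable b := hsumnorm.of_norm
  set L : ℂ := ∑' k, b k with hL
  have hT : Tendsto (fun n => ∑ k ∈ Finset.range n, b k) atTop (𝓝 L) :=
    hsumb.hasSum.tendsto_sum_nat
  have hLbound : ‖L‖ ≤ C :=
    le_trans (norm_tsum_le_tsum_norm hsumnorm) (Summable.tsum_le_of_sum_range_le hsumnorm hpartial)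
  -- a n → 0
  have haz : Tendsto a atTop (𝓝 0) := by
    have h2 : Tendsto (fun n : ℕ => Real.log n / (n:ℝ) ^ β) atTop (𝓝 0) :=
      ((isLittleO_log_rpow_atTop hs).tendsto_div_nhds_zero).comp
        tendsto_natCast_atTop_atTop
    apply squeeze_zero_norm' _ h2
    · filter_upwards [eventually_ge_atTop 1] with n hn
      have hn1 : (1:ℝ) ≤ (n:ℝ) := by exact_mod_cast hn
      have hn0 : (0:ℝ) < (n:ℝ) := lt_of_lt_of_le one_pos hn1
      rw [ha]
      simp only []
      rw [norm_mul, Complex.norm_real, Real.norm_of_nonneg (Real.log_nonneg hn1),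
        ← Complex.ofReal_natCast,
        Complex.norm_cpow_eq_rpow_re_of_pos hn0, Complex.neg_re,
        Real.rpow_neg hn0.le, div_eq_mul_inv]
  -- the structural identity
  have ha1 : a 1 = 0 := by simp [ha]
  have hid : ∀ N : ℕ, (∑ n ∈ Finset.Icc 1 N,
      -((-1 : ℂ) ^ (n + 1) * (Real.log n : ℂ) * (n : ℂ) ^ (-s)))
      = (∑ k ∈ Finset.range (N/2), b k) + (if Even N then a (N+1) else 0) := by
    intro N
    induction N with
    | zero => simp [ha1]
    | succ N ih =>
      rw [Finset.sum_Icc_succ_top (by omega : 1 ≤ N + 1), ih]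
      have hterm : -((-1 : ℂ) ^ (N + 1 + 1) * (Real.log (N+1:ℕ) : ℂ) * ((N+1:ℕ) : ℂ) ^ (-s))
          = (-1 : ℂ) ^ (N+1) * a (N+1) := by
        rw [ha]; push_cast; ring
      rw [hterm]
      rcases Nat.even_or_odd N with hN | hN
      · have hE1 : ¬ Even (N+1) := by simp [Nat.even_add_one, hN]
        have hdiv : (N+1)/2 = N/2 := by
          obtain ⟨m, rfl⟩ := hN; omega
        have hpow : ((-1 : ℂ)) ^ (N+1) = -1 := (Even.add_one hN).neg_one_pow
        rw [hdiv, if_pos hN, if_neg hE1, hpow]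
        ring
      · have hE1 : Even (N+1) := Odd.add_one hN
        have hNE : ¬ Even N := Nat.not_even_iff_odd.mpr hN
        have hdiv : (N+1)/2 = N/2 + 1 := by
          obtain ⟨m, rfl⟩ := hN; omega
        have hpow : ((-1 : ℂ)) ^ (N+1) = 1 := hE1.neg_one_pow
        rw [hdiv, if_pos hE1, if_neg hNE, hpow, Finset.sum_range_succ]
        have hb1 : b (N/2) = a (N+1) - a (N+2) := by
          obtain ⟨m, rfl⟩ := hN
          have hm : (2*m+1)/2 = m := by omega
          rw [hb, hm, show 2*m+1+1 = 2*m+2 from by omega, show 2*m+1+2 = 2*m+3 from by omega]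
        rw [hb1]
        ring
  refine ⟨L, ?_, ?_⟩
  · have hdiv2 : Tendsto (fun N : ℕ => N / 2) atTop atTop := by
      apply tendsto_atTop_atTop.mpr
      intro m
      exact ⟨2*m, fun n hn => by omega⟩
    have hE : Tendsto (fun N : ℕ => if Even N then a (N+1) else 0) atTop (𝓝 0) := by
      have h2 : Tendsto (fun N : ℕ => ‖a (N+1)‖) atTop (𝓝 0) := by
        have := (haz.comp (tendsto_add_atTop_nat 1)).norm
        simpa using this
      apply squeeze_zero_norm' _ h2
      filter_upwards with N
      split <;> simp
    have := (hT.comp hdiv2).add hE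
    rw [add_zero] at this
    exact Tendsto.congr (fun N => (hid N).symm) this
  · exact hLbound
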